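/- Let T : X → X be a surjective isometry of a two-dimensional normed space X fixing the origin, with a fixed determinant form [·,·]. Then T is also an isometry with respect to the anti-norm ‖z‖ₐ = sup{|[z,w]| : ‖w‖ = 1}. -/

import Mathlib

open MeasureTheory

section Aux

variable {X : Type*} [NormedAddCommGroup X] [NormedSpace ℝ X]

/-- An alternating bilinear form scales by the determinant under composition. -/
theorem omega_comp_det (hdim : Module.finrank ℝ X = 2)
    (ω : X →ₗ[ℝ] X →ₗ[ℝ] ℝ) (halt : ∀ x : X, ω x x = 0)
    (g : X →ₗ[ℝ] X) (x y : X) :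
    ω (g x) (g y) = LinearMap.det g * ω x y := by
  haveI : FiniteDimensional ℝ X := .of_finrank_eq_succ hdim
  let f : X [⋀^Fin 2]→ₗ[ℝ] ℝ :=
    { toFun := fun v => ω (v 0) (v 1)
      map_update_add' := by
        intro _ v i a b
        fin_cases i <;> simp [Function.update_apply]
      map_update_smul' := by
        intro _ v i c a
        fin_cases i <;> simp [Function.update_apply]
      map_eq_zero_of_eq' := by
        intro v i j hv hij
        fin_cases i <;> fin_cases j
        · exact absurd rfl hij
        · show ω (v 0) (v 1) = 0
          rw [show v 0 = v 1 from hv]; exact halt _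
        · show ω (v 0) (v 1) = 0
          rw [show v 1 = v 0 from hv]; exact halt _
        · exact absurd rfl hij }
  let b : Module.Basis (Fin 2) ℝ X := Module.finBasisOfFinrankEq ℝ X hdim
  have hf := f.eq_smul_basis_det b
  have h1 := DFunLike.congr_fun hf ![g x, g y]
  have h2 := DFunLike.congr_fun hf ![x, y]
  simp only [AlternatingMap.smul_apply, smul_eq_mul] at h1 h2
  have hcomp : (![g x, g y] : Fin 2 → X) = g ∘ ![x, y] := by
    funext i; fin_cases i <;> rfl
  have h3 : b.det (g ∘ ![x, y]) = LinearMap.det g * b.det ![x, y] :=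
    b.det_comp g ![x, y]
  have hfx : f ![g x, g y] = ω (g x) (g y) := by simp [f]
  have hfy : f ![x, y] = ω x y := by simp [f]
  rw [← hfx, h1, hcomp, h3, ← hfy, h2]
  ring

/-- A linear isometry equivalence of a finite-dimensional real normed space has
determinant of absolute value one. -/
theorem abs_det_isometry (hdim : Module.finrank ℝ X = 2)
    (e : X ≃ₗᵢ[ℝ] X) : |LinearMap.det (e.toLinearEquiv : X →ₗ[ℝ] X)| = 1 := by
  haveI : FiniteDimensional ℝ X := .of_finrank_eq_succ hdim
  borelize X
  set g : X →ₗ[ℝ] X := (e.toLinearEquiv : X →ₗ[ℝ] X) with hg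
  have hdet : LinearMap.det g ≠ 0 := by
    have := LinearEquiv.isUnit_det' e.toLinearEquiv
    exact this.ne_zero
  let b : Module.Basis (Fin 2) ℝ X := Module.finBasisOfFinrankEq ℝ X hdim
  let μ : Measure X := b.addHaar
  have hpre : g ⁻¹' (Metric.ball 0 1) = Metric.ball 0 1 := by
    ext x
    simp only [Set.mem_preimage, Metric.mem_ball, dist_zero_right]
    constructor
    · intro h; rwa [show g x = e x from rfl, e.norm_map] at h
    · intro h; rw [show g x = e x from rfl, e.norm_map]; exact h
  have hmeas := Measure.addHaar_preimage_linearMap μ hdet (Metric.ball 0 1)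
  rw [hpre] at hmeas
  have hpos : μ (Metric.ball (0 : X) 1) ≠ 0 :=
    (Metric.measure_ball_pos μ 0 one_pos).ne'
  have hfin : μ (Metric.ball (0 : X) 1) ≠ ⊤ := measure_ball_lt_top.ne
  have h1 : ENNReal.ofReal |(LinearMap.det g)⁻¹| = 1 := by
    nth_rewrite 1 [← one_mul (μ (Metric.ball (0 : X) 1))] at hmeas
    exact ((ENNReal.mul_left_inj hpos hfin).mp hmeas).symm
  have h2 : |(LinearMap.det g)⁻¹| = 1 := by
    have hnn : (0 : ℝ) ≤ |(LinearMap.det g)⁻¹| := abs_nonneg _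
    have := congrArg ENNReal.toReal h1
    rwa [ENNReal.toReal_ofReal hnn, ENNReal.toReal_one] at this
  rw [abs_inv, inv_eq_one] at h2
  exact h2

end Aux

/-- A surjective isometry of a 2-dimensional normed space fixing the
origin is also an isometry for the anti-norm ‖z‖ₐ = sup{|ω z w| : ‖w‖=1}. -/
theorem stmt_7 {X : Type*} [NormedAddCommGroup X] [NormedSpace ℝ X]
    (hdim : Module.finrank ℝ X = 2)
    (ω : X →ₗ[ℝ] X →ₗ[ℝ] ℝ) (halt : ∀ x : X, ω x x = 0) (hne : ω ≠ 0)
    (N : X → ℝ)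
    (hN : ∀ z, N z = sSup {r : ℝ | ∃ w : X, ‖w‖ = 1 ∧ r = |ω z w|})
    (T : X → X) (hsurj : Function.Surjective T) (h0 : T 0 = 0)
    (hiso : ∀ u v : X, ‖T u - T v‖ = ‖u - v‖) :
    ∀ u v : X, N (T u - T v) = N (u - v) := by
  have hisom : Isometry T := Isometry.of_dist_eq fun u v => by
    rw [dist_eq_norm, dist_eq_norm]; exact hiso u v
  let ie : X ≃ᵢ X :=
    { toEquiv := Equiv.ofBijective T ⟨hisom.injective, hsurj⟩
      isometry_toFun := hisom }
  have hie0 : ie 0 = 0 := h0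
  let e : X ≃ₗᵢ[ℝ] X := ie.toRealLinearIsometryEquivOfMapZero hie0
  have heT : ∀ x, e x = T x := fun x => by
    rw [IsometryEquiv.coe_toRealLinearIsometryEquivOfMapZero]; rfl
  set g : X →ₗ[ℝ] X := (e.toLinearEquiv : X →ₗ[ℝ] X) with hg
  have hgT : ∀ x, g x = T x := heT
  have hdet : |LinearMap.det g| = 1 := abs_det_isometry hdim e
  have hkey : ∀ x y : X, ω (g x) (g y) = LinearMap.det g * ω x y :=
    omega_comp_det hdim ω halt g
  intro u v
  have hTz : T u - T v = g (u - v) := by rw [map_sub, hgT, hgT]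
  rw [hN, hN, hTz]
  congr 1
  ext r
  simp only [Set.mem_setOf_eq]
  constructor
  · rintro ⟨w, hw, rfl⟩
    refine ⟨e.symm w, by rw [e.symm.norm_map]; exact hw, ?_⟩
    have hww : w = g (e.symm w) := by
      show w = e (e.symm w); rw [e.apply_symm_apply]
    have hw2 : (ω (g (u - v))) w = LinearMap.det g * (ω (u - v)) (e.symm w) := by
      nth_rewrite 1 [hww]
      exact hkey _ _
    rw [hw2, abs_mul, hdet, one_mul]
  · rintro ⟨w, hw, rfl⟩
    refine ⟨e w, by rw [e.norm_map]; exact hw, ?_⟩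
    have : e w = g w := rfl
    rw [this, hkey, abs_mul, hdet, one_mul]
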